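/- Let n ≥ 2 be even, l < 2^n with l ≠ 0, and set w = wt(l). Let C = {i < 2^n : wt(i) ∈ {n/2 − 1, n/2}} and R = {i < 2^n : wt(i) ∈ {n/2 − 2, n/2 − 1, n/2, n/2 + 1}}. Then the cardinality of C ∩ (l ⊕ (R \ C)) equals C(w, ⌈(w+1)/2⌉) · C(n − w + 1, n/2 − ⌈w/2⌉), where C(·,·) denotes the binomial coefficient (with the convention C(p,q) = 0 if q < 0 or q > p). -/

import Mathlib

/-- Hamming weight of a natural number. -/
def wt (n : ℕ) : ℕ := (Nat.digits 2 n).sum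

open Finset
open scoped symmDiff

lemma wt_two_mul (n : ℕ) : wt (2 * n) = wt n := by
  rcases Nat.eq_zero_or_pos n with rfl | h
  · simp [wt]
  · unfold wt
    rw [Nat.digits_def' (by norm_num : 1 < 2) (by omega)]
    simp [Nat.mul_div_cancel_left]

lemma wt_two_mul_add_one (n : ℕ) : wt (2 * n + 1) = wt n + 1 := by
  unfold wt
  rw [Nat.digits_def' (by norm_num : 1 < 2) (by omega)]
  simp [Nat.mul_add_div, Nat.mul_add_mod]
  omega

lemma wt_eq_length (n : ℕ) : wt n = n.bitIndices.length := by
  induction n using Nat.strong_induction_on with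
  | _ n ih =>
    rcases Nat.eq_zero_or_pos n with rfl | h
    · simp [wt]
    rcases Nat.even_or_odd n with ⟨m, rfl⟩ | ⟨m, rfl⟩
    · rw [show m + m = 2 * m by ring, wt_two_mul, Nat.bitIndices_two_mul, List.length_map]
      exact ih m (by omega)
    · rw [wt_two_mul_add_one, Nat.bitIndices_two_mul_add_one]
      simp only [List.length_cons, List.length_map]
      rw [ih m (by omega)]

lemma wt_card (n : ℕ) : wt n = (Finset.equivBitIndices n).card := by
  rw [wt_eq_length]
  simp [Finset.equivBitIndices, List.card_toFinset, Nat.bitIndices_sorted.nodup.dedup]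

lemma mem_bitIndices_iff : ∀ (n a : ℕ), a ∈ n.bitIndices ↔ n.testBit a = true := by
  intro n
  induction n using Nat.strong_induction_on with
  | _ n ih =>
    intro a
    rcases Nat.eq_zero_or_pos n with rfl | h
    · simp
    rcases Nat.even_or_odd n with ⟨m, rfl⟩ | ⟨m, rfl⟩
    · rw [show m + m = 2 * m by ring, Nat.bitIndices_two_mul]
      cases a with
      | zero => simp [Nat.testBit_zero, Nat.mul_mod_right]
      | succ a =>
        rw [Nat.testBit_add_one]
        simp only [List.mem_map]
        rw [Nat.mul_div_cancel_left _ (by norm_num)]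
        constructor
        · rintro ⟨b, hb, hb2⟩
          rw [show a = b by omega]
          exact (ih m (by omega) _).1 hb
        · intro hb
          exact ⟨a, (ih m (by omega) _).2 hb, rfl⟩
    · rw [Nat.bitIndices_two_mul_add_one]
      cases a with
      | zero => simp [Nat.testBit_zero, Nat.mul_add_mod]
      | succ a =>
        rw [Nat.testBit_add_one]
        simp only [List.mem_cons, List.mem_map]
        rw [show (2 * m + 1) / 2 = m by omega]
        constructor
        · rintro (h | ⟨b, hb, hb2⟩)
          · omega
          · rw [show b = a by omega] at hb
            exact (ih m (by omega) _).1 hb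
        · intro hb
          exact Or.inr ⟨a, (ih m (by omega) _).2 hb, rfl⟩



lemma sum_range_two_pow (k : ℕ) : ∑ i ∈ Finset.range k, 2 ^ i = 2 ^ k - 1 := by
  induction k with
  | zero => simp
  | succ k ih => rw [Finset.sum_range_succ, ih]; have := Nat.one_le_two_pow (n := k); omega


lemma mem_equiv (n a : ℕ) : a ∈ Finset.equivBitIndices n ↔ n.testBit a = true := by
  simp [Finset.equivBitIndices, mem_bitIndices_iff]

lemma equiv_xor (x y : ℕ) :
    Finset.equivBitIndices (x ^^^ y) = Finset.equivBitIndices x ∆ Finset.equivBitIndices y := by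
  ext a
  simp only [mem_equiv, Finset.mem_symmDiff, Nat.testBit_xor]
  cases x.testBit a <;> cases y.testBit a <;> simp

lemma equiv_subset_range {k n : ℕ} : Finset.equivBitIndices n ⊆ Finset.range k ↔ n < 2 ^ k := by
  constructor
  · intro h
    have h1 : n = ∑ i ∈ Finset.equivBitIndices n, 2 ^ i :=
      (Finset.twoPowSum_toFinset_bitIndices n).symm
    have h2 : ∑ i ∈ Finset.equivBitIndices n, 2 ^ i ≤ ∑ i ∈ Finset.range k, 2 ^ i :=
      Finset.sum_le_sum_of_subset h
    have h3 := sum_range_two_pow k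
    have : (0:ℕ) < 2 ^ k := Nat.two_pow_pos k
    omega
  · intro h a ha
    rw [Finset.mem_range]
    have : 2 ^ a ≤ n := Nat.two_pow_le_of_mem_bitIndices (by simpa [Finset.equivBitIndices] using ha)
    by_contra hc
    have : 2 ^ k ≤ 2 ^ a := Nat.pow_le_pow_right (by norm_num) (by omega)
    omega

lemma card_symmDiff_add (s t : Finset ℕ) :
    (s ∆ t).card + 2 * (s ∩ t).card = s.card + t.card := by
  have h1 : (s \ t).card + (s ∩ t).card = s.card := Finset.card_sdiff_add_card_inter s t
  have h2 : (t \ s).card + (t ∩ s).card = t.card := Finset.card_sdiff_add_card_inter t s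
  have h3 : s ∆ t = (s \ t) ∪ (t \ s) := by
    ext a; simp [Finset.mem_symmDiff]
  have h4 : ((s \ t) ∪ (t \ s)).card = (s \ t).card + (t \ s).card := by
    apply Finset.card_union_of_disjoint
    exact disjoint_sdiff_sdiff
  rw [Finset.inter_comm t s] at h2
  rw [h3, h4]
  omega



lemma count_inter (n w t k : ℕ) (L : Finset ℕ) (hL : L ⊆ Finset.range n) (hw : L.card = w)
    (hkt : k ≤ t) :
    (((Finset.range n).powerset).filter (fun S => S.card = t ∧ (S ∩ L).card = k)).card
      = w.choose k * (n - w).choose (t - k) := by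
  rw [show w.choose k * (n - w).choose (t - k)
      = ((L.powersetCard k) ×ˢ ((Finset.range n \ L).powersetCard (t - k))).card by
    rw [Finset.card_product, Finset.card_powersetCard, Finset.card_powersetCard, hw,
      Finset.card_sdiff_of_subset hL, Finset.card_range, hw]]
  apply Finset.card_bij' (fun S _ => (S ∩ L, S \ L)) (fun p _ => p.1 ∪ p.2)
  · intro S hS
    simp only [Finset.mem_filter, Finset.mem_powerset] at hS
    obtain ⟨hSr, hSt, hSk⟩ := hS
    simp only [Finset.mem_product, Finset.mem_powersetCard]
    refine ⟨⟨Finset.inter_subset_right, hSk⟩, ⟨Finset.sdiff_subset_sdiff hSr (le_refl L), ?_⟩⟩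
    have := Finset.card_inter_add_card_sdiff S L
    omega
  · intro p hp
    simp only [Finset.mem_product, Finset.mem_powersetCard] at hp
    obtain ⟨⟨h1s, h1c⟩, ⟨h2s, h2c⟩⟩ := hp
    have hdisj : Disjoint p.1 p.2 := by
      have := (Finset.subset_sdiff.mp h2s).2
      exact (Finset.disjoint_of_subset_left h1s this.symm)
    simp only [Finset.mem_filter, Finset.mem_powerset]
    have h2L : Disjoint p.2 L := (Finset.subset_sdiff.mp h2s).2
    refine ⟨?_, ?_, ?_⟩
    · exact Finset.union_subset (h1s.trans hL) ((Finset.subset_sdiff.mp h2s).1)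
    · rw [Finset.card_union_of_disjoint hdisj]; omega
    · rw [Finset.union_inter_distrib_right, Finset.inter_eq_left.mpr h1s,
        (Finset.disjoint_iff_inter_eq_empty.mp h2L)]
      simp [h1c]
  · intro S hS
    ext a; simp only [Finset.mem_union, Finset.mem_inter, Finset.mem_sdiff]; tauto
  · intro p hp
    simp only [Finset.mem_product, Finset.mem_powersetCard] at hp
    obtain ⟨⟨h1s, h1c⟩, ⟨h2s, h2c⟩⟩ := hp
    have h2L : Disjoint p.2 L := (Finset.subset_sdiff.mp h2s).2
    have e1 : (p.1 ∪ p.2) ∩ L = p.1 := by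
      rw [Finset.union_inter_distrib_right, Finset.inter_eq_left.mpr h1s,
        Finset.disjoint_iff_inter_eq_empty.mp h2L]
      simp
    have e2 : (p.1 ∪ p.2) \ L = p.2 := by
      rw [Finset.union_sdiff_distrib, Finset.sdiff_eq_empty_iff_subset.mpr h1s,
        Finset.sdiff_eq_self_of_disjoint h2L]
      simp
    exact Prod.ext e1 e2

lemma count_empty (n t k : ℕ) (L : Finset ℕ) (hkt : t < k) :
    (((Finset.range n).powerset).filter (fun S => S.card = t ∧ (S ∩ L).card = k)).card = 0 := by
  rw [Finset.card_eq_zero, Finset.filter_eq_empty_iff]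
  rintro S _ ⟨hc, hk⟩
  have : (S ∩ L).card ≤ S.card := Finset.card_le_card Finset.inter_subset_left
  omega



lemma branch_eq (n m w t k : ℕ) (L : Finset ℕ) (hw : L.card = w)
    (hiff : ∀ d x : ℕ, d + 2 * x = w + t → ((d = m - 1 ∨ d = m) ↔ x = k)) :
    ((Finset.range n).powerset).filter
        (fun S => S.card = t ∧ ((L ∆ S).card = m - 1 ∨ (L ∆ S).card = m))
      = ((Finset.range n).powerset).filter (fun S => S.card = t ∧ (S ∩ L).card = k) := by
  apply Finset.filter_congr
  intro S _
  have hid := card_symmDiff_add L S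
  have hc : (S ∩ L).card = (L ∩ S).card := by rw [Finset.inter_comm]
  constructor
  · rintro ⟨ht, hd⟩
    refine ⟨ht, ?_⟩
    have := (hiff ((L ∆ S).card) ((L ∩ S).card) (by omega)).1 hd
    omega
  · rintro ⟨ht, hk⟩
    refine ⟨ht, ?_⟩
    exact (hiff ((L ∆ S).card) ((L ∩ S).card) (by omega)).2 (by omega)

lemma main_count (n m w : ℕ) (hm : n = 2 * m) (hm2 : 2 ≤ m) (L : Finset ℕ)
    (hL : L ⊆ Finset.range n) (hw : L.card = w) (hw1 : 1 ≤ w) :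
    (((Finset.range n).powerset).filter
        (fun S => (S.card = m - 2 ∨ S.card = m + 1) ∧
          ((L ∆ S).card = m - 1 ∨ (L ∆ S).card = m))).card
      = w.choose ((w + 2) / 2) * (n - w + 1).choose (m - (w + 1) / 2) := by
  have hwn : w ≤ n := by
    rw [← hw]
    exact le_trans (Finset.card_le_card hL) (by simp)
  -- split the filter
  have hsplit : (((Finset.range n).powerset).filter
        (fun S => (S.card = m - 2 ∨ S.card = m + 1) ∧
          ((L ∆ S).card = m - 1 ∨ (L ∆ S).card = m))).card
      = (((Finset.range n).powerset).filter
          (fun S => S.card = m - 2 ∧ ((L ∆ S).card = m - 1 ∨ (L ∆ S).card = m))).card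
        + (((Finset.range n).powerset).filter
          (fun S => S.card = m + 1 ∧ ((L ∆ S).card = m - 1 ∨ (L ∆ S).card = m))).card := by
    rw [← Finset.card_union_of_disjoint, ← Finset.filter_or]
    · apply congrArg
      apply Finset.filter_congr
      intro S _
      tauto
    · rw [Finset.disjoint_left]
      rintro S hS1 hS2
      simp only [Finset.mem_filter] at hS1 hS2
      omega
  rw [hsplit]
  rcases Nat.even_or_odd w with ⟨a, haw⟩ | ⟨a, haw⟩
  · -- w even, w = a + a with a ≥ 1
    obtain ⟨a, rfl⟩ : ∃ b, w = 2 * b + 2 := ⟨a - 1, by omega⟩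
    by_cases hwn' : 2 * a + 2 = n
    · -- w = n
      rw [branch_eq n m (2*a+2) (m-2) (m-1) L hw (by intro d x _; omega),
        branch_eq n m (2*a+2) (m+1) (a+2) L hw (by intro d x _; omega),
        count_empty n (m-2) (m-1) L (by omega),
        count_inter n (2*a+2) (m+1) (a+2) L hL hw (by omega)]
      rw [show n - (2*a+2) = 0 by omega, show m + 1 - (a + 2) = 0 by omega,
        show (2*a+2+2)/2 = a + 2 by omega, show m - (2*a+2+1)/2 = 0 by omega]
      simp
    · -- w ≤ n - 2
      have ha2 : a ≤ m - 2 := by omega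
      obtain ⟨b, rfl⟩ : ∃ b, m = a + b + 2 := ⟨m - a - 2, by omega⟩
      rw [branch_eq n _ (2*a+2) (a+b+2-2) a L hw (by intro d x _; omega),
        branch_eq n _ (2*a+2) (a+b+2+1) (a+2) L hw (by intro d x _; omega),
        count_inter n (2*a+2) (a+b+2-2) a L hL hw (by omega),
        count_inter n (2*a+2) (a+b+2+1) (a+2) L hL hw (by omega)]
      rw [show n - (2*a+2) + 1 = 2*b+3 by omega, show n - (2*a+2) = 2*b+2 by omega,
        show a+b+2-2-a = b by omega,
        show a+b+2+1-(a+2) = b+1 by omega, show (2*a+2+2)/2 = a+2 by omega,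
        show a+b+2 - (2*a+2+1)/2 = b+1 by omega]
      have hp : (2*b+3).choose (b+1) = (2*b+2).choose b + (2*b+2).choose (b+1) :=
        Nat.choose_succ_succ (2*b+2) b
      have hs : (2*a+2).choose a = (2*a+2).choose (a+2) := by
        have := Nat.choose_symm (show a ≤ 2*a+2 by omega)
        rw [show 2*a+2-a = a+2 by omega] at this
        exact this.symm
      rw [hp, hs]
      ring
  · -- w odd, w = 2a+1
    subst haw
    by_cases hwn' : 2 * a + 1 = n - 1
    · -- w = n - 1
      rw [branch_eq n m (2*a+1) (m-2) (m-1) L hw (by intro d x _; omega),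
        branch_eq n m (2*a+1) (m+1) (a+1) L hw (by intro d x _; omega),
        count_empty n (m-2) (m-1) L (by omega),
        count_inter n (2*a+1) (m+1) (a+1) L hL hw (by omega)]
      rw [show n - (2*a+1) + 1 = 2 by omega, show n - (2*a+1) = 1 by omega,
        show m + 1 - (a + 1) = 1 by omega,
        show (2*a+1+2)/2 = a + 1 by omega, show m - (2*a+1+1)/2 = 0 by omega]
      simp
    · -- w ≤ n - 3
      have ha2 : a ≤ m - 2 := by omega
      obtain ⟨b, rfl⟩ : ∃ b, m = a + b + 2 := ⟨m - a - 2, by omega⟩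
      rw [branch_eq n _ (2*a+1) (a+b+2-2) a L hw (by intro d x _; omega),
        branch_eq n _ (2*a+1) (a+b+2+1) (a+1) L hw (by intro d x _; omega),
        count_inter n (2*a+1) (a+b+2-2) a L hL hw (by omega),
        count_inter n (2*a+1) (a+b+2+1) (a+1) L hL hw (by omega)]
      rw [show n - (2*a+1) + 1 = 2*b+4 by omega, show n - (2*a+1) = 2*b+3 by omega,
        show a+b+2-2-a = b by omega,
        show a+b+2+1-(a+1) = b+2 by omega, show (2*a+1+2)/2 = a+1 by omega,
        show a+b+2 - (2*a+1+1)/2 = b+1 by omega]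
      -- C(2a+1,a) C(2b+3,b) + C(2a+1,a+1) C(2b+3,b+2) = C(2a+1,a+1) C(2b+4,b+1)
      have hs1 : (2*a+1).choose a = (2*a+1).choose (a+1) := by
        have := Nat.choose_symm (show a ≤ 2*a+1 by omega)
        rw [show 2*a+1-a = a+1 by omega] at this
        exact this.symm
      have hs2 : (2*b+3).choose (b+2) = (2*b+3).choose (b+1) := by
        have := Nat.choose_symm (show b+2 ≤ 2*b+3 by omega)
        rw [show 2*b+3-(b+2) = b+1 by omega] at this
        exact this.symm
      have hp : (2*b+4).choose (b+1) = (2*b+3).choose b + (2*b+3).choose (b+1) :=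
        Nat.choose_succ_succ (2*b+3) b
      rw [hs1, hs2, hp]
      ring




theorem stmt17 (n : ℕ) (hn : 2 ≤ n) (heven : Even n) (l : ℕ) (hl : l < 2 ^ n)
    (hl0 : l ≠ 0) :
    (((Finset.range (2 ^ n)).filter (fun i => wt i = n / 2 - 1 ∨ wt i = n / 2)) ∩
        (((Finset.range (2 ^ n)).filter (fun i =>
              wt i = n / 2 - 2 ∨ wt i = n / 2 - 1 ∨ wt i = n / 2 ∨ wt i = n / 2 + 1) \
            (Finset.range (2 ^ n)).filter (fun i =>
              wt i = n / 2 - 1 ∨ wt i = n / 2)).image (fun c => l ^^^ c))).card =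
      Nat.choose (wt l) ((wt l + 2) / 2) *
        Nat.choose (n - wt l + 1) (n / 2 - (wt l + 1) / 2) := by
  by_cases hn2 : n = 2
  · subst hn2
    have w0 : wt 0 = 0 := by simp [wt]
    have w1 : wt 1 = 1 := by simp [wt]
    have w2 : wt 2 = 1 := by simp [wt]
    have w3 : wt 3 = 2 := by simp [wt]
    have hr : Finset.range (2 ^ 2) = {0, 1, 2, 3} := by decide
    norm_num at hl
    interval_cases l
    · exact absurd rfl hl0
    · rw [hr, w1]
      simp [Finset.filter_insert, Finset.filter_singleton, w0, w1, w2, w3]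
      try decide
    · rw [hr, w2]
      simp [Finset.filter_insert, Finset.filter_singleton, w0, w1, w2, w3]
      try decide
    · rw [hr, w3]
      simp [Finset.filter_insert, Finset.filter_singleton, w0, w1, w2, w3]
      try decide
  -- general case
  obtain ⟨m, hm⟩ : ∃ m, n = 2 * m := heven.exists_two_nsmul n
  have hm2 : 2 ≤ m := by omega
  have hmn : n / 2 = m := by omega
  rw [hmn]
  -- abbreviations
  set C : Finset ℕ := (Finset.range (2 ^ n)).filter (fun i => wt i = m - 1 ∨ wt i = m) with hC
  set R : Finset ℕ := (Finset.range (2 ^ n)).filter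
      (fun i => wt i = m - 2 ∨ wt i = m - 1 ∨ wt i = m ∨ wt i = m + 1) with hR
  have hinj : Function.Injective (fun c => l ^^^ c) := by
    intro a b h
    have := congrArg (l ^^^ ·) h
    simpa [← Nat.xor_assoc] using this
  have himg : C ∩ ((R \ C).image (fun c => l ^^^ c))
      = ((R \ C).filter (fun c => l ^^^ c ∈ C)).image (fun c => l ^^^ c) := by
    ext x
    simp only [Finset.mem_inter, Finset.mem_image, Finset.mem_filter]
    constructor
    · rintro ⟨hx, c, hc, rfl⟩
      exact ⟨c, ⟨hc, hx⟩, rfl⟩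
    · rintro ⟨c, ⟨hc, hx⟩, rfl⟩
      exact ⟨hx, c, hc, rfl⟩
  rw [himg, Finset.card_image_of_injective _ hinj]
  -- rewrite as a single filter over range (2^n)
  have hset : (R \ C).filter (fun c => l ^^^ c ∈ C)
      = (Finset.range (2 ^ n)).filter (fun c =>
          (wt c = m - 2 ∨ wt c = m + 1) ∧ (wt (l ^^^ c) = m - 1 ∨ wt (l ^^^ c) = m)) := by
    ext c
    simp only [hC, hR, Finset.mem_filter, Finset.mem_sdiff, Finset.mem_range, Finset.mem_filter]
    constructor
    · rintro ⟨⟨⟨hc1, hc2⟩, hc3⟩, _, hc5⟩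
      refine ⟨hc1, ?_, hc5⟩
      omega
    · rintro ⟨hc1, hc2, hc3⟩
      exact ⟨⟨⟨hc1, by omega⟩, by omega⟩, Nat.xor_lt_two_pow hl hc1, hc3⟩
  rw [hset]
  -- transport to finsets via equivBitIndices
  have htrans : ((Finset.range (2 ^ n)).filter (fun c =>
          (wt c = m - 2 ∨ wt c = m + 1) ∧ (wt (l ^^^ c) = m - 1 ∨ wt (l ^^^ c) = m))).card
      = (((Finset.range n).powerset).filter
          (fun S => (S.card = m - 2 ∨ S.card = m + 1) ∧
            (((Finset.equivBitIndices l) ∆ S).card = m - 1 ∨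
              ((Finset.equivBitIndices l) ∆ S).card = m))).card := by
    apply Finset.card_bij (fun c _ => Finset.equivBitIndices c)
    · intro c hc
      simp only [Finset.mem_filter, Finset.mem_range] at hc
      obtain ⟨hc1, hc2, hc3⟩ := hc
      simp only [Finset.mem_filter, Finset.mem_powerset]
      refine ⟨equiv_subset_range.mpr hc1, ?_, ?_⟩
      · rwa [← wt_card]
      · rw [← equiv_xor, ← wt_card]
        exact hc3
    · intro a _ b _ h
      exact Finset.equivBitIndices.injective h
    · intro S hS
      simp only [Finset.mem_filter, Finset.mem_powerset] at hS
      obtain ⟨hS1, hS2, hS3⟩ := hS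
      refine ⟨Finset.equivBitIndices.symm S, ?_, Finset.equivBitIndices.apply_symm_apply S⟩
      have hES : Finset.equivBitIndices (Finset.equivBitIndices.symm S) = S :=
        Finset.equivBitIndices.apply_symm_apply S
      simp only [Finset.mem_filter, Finset.mem_range]
      refine ⟨equiv_subset_range.mp (by rw [hES]; exact hS1), ?_, ?_⟩
      · rw [wt_card, hES]; exact hS2
      · rw [wt_card, equiv_xor, hES]; exact hS3
  rw [htrans]
  -- weight facts
  have hwl : wt l = (Finset.equivBitIndices l).card := wt_card l
  have hw1 : 1 ≤ wt l := by
    rcases Nat.eq_zero_or_pos (wt l) with h0 | h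
    · exfalso
      apply hl0
      have : Finset.equivBitIndices l = ∅ := Finset.card_eq_zero.mp (by omega)
      have h2 : Finset.equivBitIndices l = Finset.equivBitIndices 0 := by
        rw [this]
        ext a
        simp [Finset.equivBitIndices]
      exact Finset.equivBitIndices.injective h2
    · exact h
  exact main_count n m (wt l) hm hm2 (Finset.equivBitIndices l)
    (equiv_subset_range.mpr hl) hwl.symm hw1
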